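/- Key intermediate bound: under the hypotheses of the minimality inequality (p even, η horizontal arc-length parameterized on [0,τ] with η₁(0)=η₁(τ)=0, |η̇₁| ≤ 1 a.e.), setting β = ‖η₁‖_∞ and V(τ) = ∫₀^τ u₂ dt, one has (2/(p+1))·β^{p+1} ≤ ∫₀^τ η₁^p dt ≤ β^p (τ − V(τ)). -/

import Mathlib

open MeasureTheory

/-- key intermediate bound: with `β = ‖η₁‖_∞` on `[0,τ]` and
`V(τ) = ∫₀^τ u₂`, one has
`(2/(p+1))β^{p+1} ≤ ∫₀^τ η₁^p ≤ β^p (τ − V(τ))`. -/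
theorem key_intermediate_bound
    (p : ℕ) (hp2 : 2 ≤ p) (hpe : Even p) (τ : ℝ) (hτ : 0 < τ)
    (u1 u2 η1 : ℝ → ℝ) (β : ℝ)
    (hu1int : IntervalIntegrable u1 volume 0 τ)
    (hu2int : IntervalIntegrable u2 volume 0 τ)
    (hnorm : ∀ᵐ t ∂volume, t ∈ Set.Icc 0 τ → u1 t ^ 2 + u2 t ^ 2 = 1)
    (hη1 : ∀ t, η1 t = ∫ s in (0:ℝ)..t, u1 s)
    (hend1 : η1 τ = 0)
    (hzero : (∫ t in (0:ℝ)..τ, u2 t * η1 t ^ p) = 0)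
    (hβ : IsGreatest ((fun t => |η1 t|) '' Set.Icc 0 τ) β) :
    2 / ((p : ℝ) + 1) * β ^ (p + 1) ≤ (∫ t in (0:ℝ)..τ, η1 t ^ p) ∧
    (∫ t in (0:ℝ)..τ, η1 t ^ p) ≤ β ^ p * (τ - ∫ t in (0:ℝ)..τ, u2 t) := by
  have hτ0 : (0:ℝ) ≤ τ := hτ.le
  have huIcc : Set.uIcc (0:ℝ) τ = Set.Icc 0 τ := Set.uIcc_of_le hτ0
  have hη10 : η1 0 = 0 := by simp [hη1]
  -- Lipschitz bound for η1 on [0,τ]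
  have hlip : ∀ s ∈ Set.Icc (0:ℝ) τ, ∀ t ∈ Set.Icc (0:ℝ) τ, |η1 s - η1 t| ≤ |s - t| := by
    intro s hs t ht
    have hsub : Set.uIcc t s ⊆ Set.uIcc (0:ℝ) τ := by
      rw [huIcc]; exact Set.uIcc_subset_Icc ht hs
    have hints : IntervalIntegrable u1 volume 0 s :=
      hu1int.mono_set (by rw [huIcc]; exact Set.uIcc_subset_Icc ⟨le_rfl, hτ0⟩ hs)
    have hintt : IntervalIntegrable u1 volume 0 t :=
      hu1int.mono_set (by rw [huIcc]; exact Set.uIcc_subset_Icc ⟨le_rfl, hτ0⟩ ht)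
    have heq : η1 s - η1 t = ∫ x in t..s, u1 x := by
      rw [hη1 s, hη1 t, intervalIntegral.integral_interval_sub_left hints hintt]
    have hae : ∀ᵐ x ∂volume.restrict (Set.uIoc t s), ‖u1 x‖ ≤ (1:ℝ) := by
      filter_upwards [ae_restrict_of_ae hnorm, ae_restrict_mem measurableSet_uIoc]
        with x hx1 hx2
      have hxIcc : x ∈ Set.Icc (0:ℝ) τ := by
        have : x ∈ Set.uIcc (0:ℝ) τ := hsub (Set.uIoc_subset_uIcc hx2)
        rwa [huIcc] at this
      have h := hx1 hxIcc
      rw [Real.norm_eq_abs]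
      nlinarith [sq_abs (u1 x), abs_nonneg (u1 x), sq_nonneg (u2 x)]
    calc |η1 s - η1 t| = ‖∫ x in t..s, u1 x‖ := by rw [heq, Real.norm_eq_abs]
      _ ≤ |∫ x in t..s, (1:ℝ)| :=
          intervalIntegral.norm_integral_le_abs_of_norm_le hae intervalIntegrable_const
      _ = |s - t| := by simp
  -- continuity
  have hcont : ContinuousOn η1 (Set.Icc 0 τ) := by
    have : LipschitzOnWith 1 η1 (Set.Icc 0 τ) := by
      apply LipschitzOnWith.of_dist_le_mul
      intro x hx y hy
      simpa [Real.dist_eq] using hlip x hx y hy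
    exact this.continuousOn
  have hη1pInt : IntervalIntegrable (fun t => η1 t ^ p) volume 0 τ :=
    (by rw [huIcc]; exact hcont.pow p : ContinuousOn (fun t => η1 t ^ p) (Set.uIcc 0 τ)).intervalIntegrable
  have hmono : ∀ a b, a ∈ Set.Icc (0:ℝ) τ → b ∈ Set.Icc (0:ℝ) τ →
      IntervalIntegrable (fun t => η1 t ^ p) volume a b := fun a b ha hb =>
    hη1pInt.mono_set (by rw [huIcc]; exact Set.uIcc_subset_Icc ha hb)
  have hβub : ∀ t ∈ Set.Icc (0:ℝ) τ, |η1 t| ≤ β := fun t ht => hβ.2 ⟨t, ht, rfl⟩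
  -- maximizer
  obtain ⟨t₀, ht₀, hval⟩ := hβ.1
  simp only at hval
  have hβnn : 0 ≤ β := hval ▸ abs_nonneg _
  have h1 : β ≤ t₀ := by
    have h := hlip t₀ ht₀ 0 ⟨le_rfl, hτ0⟩
    rw [hη10, sub_zero, sub_zero, hval, abs_of_nonneg ht₀.1] at h
    exact h
  have h2 : t₀ + β ≤ τ := by
    have h := hlip t₀ ht₀ τ ⟨hτ0, le_rfl⟩
    rw [hend1, sub_zero, hval, abs_of_nonpos (by linarith [ht₀.2] : t₀ - τ ≤ 0)] at h
    linarith
  have hpt : ∀ t ∈ Set.Icc (0:ℝ) τ, β - |t - t₀| ≤ |η1 t| := by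
    intro t ht
    have h := hlip t₀ ht₀ t ht
    have h3 := abs_sub_abs_le_abs_sub (η1 t₀) (η1 t)
    rw [hval] at h3
    have : |t₀ - t| = |t - t₀| := abs_sub_comm _ _
    linarith
  constructor
  · -- lower bound
    have hp1 : (0:ℝ) < (p:ℝ) + 1 := by positivity
    have ha1 : t₀ - β ∈ Set.Icc (0:ℝ) τ := ⟨by linarith, by linarith [ht₀.2]⟩
    have ha3 : t₀ + β ∈ Set.Icc (0:ℝ) τ := ⟨by linarith [ht₀.1], h2⟩
    have hzm : (0:ℝ) ∈ Set.Icc (0:ℝ) τ := ⟨le_rfl, hτ0⟩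
    have hτm : τ ∈ Set.Icc (0:ℝ) τ := ⟨hτ0, le_rfl⟩
    have e1 : (∫ t in (0:ℝ)..(t₀-β), η1 t ^ p) + (∫ t in (t₀-β)..τ, η1 t ^ p)
        = ∫ t in (0:ℝ)..τ, η1 t ^ p :=
      intervalIntegral.integral_add_adjacent_intervals (hmono _ _ hzm ha1) (hmono _ _ ha1 hτm)
    have e2 : (∫ t in (t₀-β)..t₀, η1 t ^ p) + (∫ t in t₀..τ, η1 t ^ p)
        = ∫ t in (t₀-β)..τ, η1 t ^ p :=
      intervalIntegral.integral_add_adjacent_intervals (hmono _ _ ha1 ht₀) (hmono _ _ ht₀ hτm)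
    have e3 : (∫ t in t₀..(t₀+β), η1 t ^ p) + (∫ t in (t₀+β)..τ, η1 t ^ p)
        = ∫ t in t₀..τ, η1 t ^ p :=
      intervalIntegral.integral_add_adjacent_intervals (hmono _ _ ht₀ ha3) (hmono _ _ ha3 hτm)
    have hA : 0 ≤ ∫ t in (0:ℝ)..(t₀-β), η1 t ^ p :=
      intervalIntegral.integral_nonneg (by linarith) (fun u _ => hpe.pow_nonneg _)
    have hD : 0 ≤ ∫ t in (t₀+β)..τ, η1 t ^ p :=
      intervalIntegral.integral_nonneg h2 (fun u _ => hpe.pow_nonneg _)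
    have hB : β ^ (p+1) / ((p:ℝ)+1) ≤ ∫ t in (t₀-β)..t₀, η1 t ^ p := by
      have hcalc : (∫ t in (t₀-β)..t₀, (t - (t₀-β)) ^ p) = β ^ (p+1) / ((p:ℝ)+1) := by
        rw [intervalIntegral.integral_comp_sub_right (fun x => x ^ p) (t₀-β)]
        simp only [sub_self, sub_sub_cancel]
        rw [integral_pow]
        simp [zero_pow (Nat.succ_ne_zero p)]
      rw [← hcalc]
      apply intervalIntegral.integral_mono_on (by linarith)
        (((continuous_id.sub continuous_const).pow p).intervalIntegrable _ _) (hmono _ _ ha1 ht₀)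
      intro t ht
      have htIcc : t ∈ Set.Icc (0:ℝ) τ := ⟨by linarith [ht.1], by linarith [ht.2, ht₀.2]⟩
      have habs : |t - t₀| = t₀ - t := by
        rw [abs_sub_comm]; exact abs_of_nonneg (by linarith [ht.2])
      have hlow : t - (t₀ - β) ≤ |η1 t| := by
        have := hpt t htIcc; rw [habs] at this; linarith
      calc (t - (t₀-β)) ^ p ≤ |η1 t| ^ p :=
            pow_le_pow_left₀ (by linarith [ht.1]) hlow p
        _ = η1 t ^ p := hpe.pow_abs _
    have hC : β ^ (p+1) / ((p:ℝ)+1) ≤ ∫ t in t₀..(t₀+β), η1 t ^ p := by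
      have hcalc : (∫ t in t₀..(t₀+β), ((t₀+β) - t) ^ p) = β ^ (p+1) / ((p:ℝ)+1) := by
        have hev : ∀ t : ℝ, ((t₀+β) - t) ^ p = (t - (t₀+β)) ^ p := by
          intro t
          rw [show (t₀+β) - t = -(t - (t₀+β)) by ring, hpe.neg_pow]
        simp_rw [hev]
        rw [intervalIntegral.integral_comp_sub_right (fun x => x ^ p) (t₀+β)]
        simp only [sub_self]
        rw [show t₀ - (t₀ + β) = -β by ring, integral_pow]
        rw [Odd.neg_pow (hpe.add_one) β]
        simp [zero_pow (Nat.succ_ne_zero p)]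
      rw [← hcalc]
      apply intervalIntegral.integral_mono_on (by linarith)
        (((continuous_const.sub continuous_id).pow p).intervalIntegrable _ _) (hmono _ _ ht₀ ha3)
      intro t ht
      have htIcc : t ∈ Set.Icc (0:ℝ) τ := ⟨by linarith [ht.1, ht₀.1], by linarith [ht.2]⟩
      have habs : |t - t₀| = t - t₀ := abs_of_nonneg (by linarith [ht.1])
      have hlow : (t₀+β) - t ≤ |η1 t| := by
        have := hpt t htIcc; rw [habs] at this; linarith
      calc ((t₀+β) - t) ^ p ≤ |η1 t| ^ p :=
            pow_le_pow_left₀ (by linarith [ht.2]) hlow p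
        _ = η1 t ^ p := hpe.pow_abs _
    have : 2 / ((p:ℝ) + 1) * β ^ (p + 1) = 2 * (β ^ (p+1) / ((p:ℝ)+1)) := by ring
    rw [this]
    linarith
  · -- upper bound
    have hmulInt : IntervalIntegrable (fun t => u2 t * η1 t ^ p) volume 0 τ :=
      hu2int.mul_continuousOn (by rw [huIcc]; exact hcont.pow p)
    have hsplit : (∫ t in (0:ℝ)..τ, η1 t ^ p)
        = ∫ t in (0:ℝ)..τ, (1 - u2 t) * η1 t ^ p := by
      have hfun : ∀ t, (1 - u2 t) * η1 t ^ p = η1 t ^ p - u2 t * η1 t ^ p := by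
        intro t; ring
      simp_rw [hfun]
      rw [intervalIntegral.integral_sub hη1pInt hmulInt, hzero, sub_zero]
    have hint2 : IntervalIntegrable (fun t => (1 - u2 t) * β ^ p) volume 0 τ :=
      (intervalIntegrable_const.sub hu2int).mul_const _
    have hint1 : IntervalIntegrable (fun t => (1 - u2 t) * η1 t ^ p) volume 0 τ := by
      have hfun : ∀ t, (1 - u2 t) * η1 t ^ p = η1 t ^ p - u2 t * η1 t ^ p := by
        intro t; ring
      simp_rw [hfun]
      exact hη1pInt.sub hmulInt
    have hupper : (∫ t in (0:ℝ)..τ, (1 - u2 t) * η1 t ^ p)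
        ≤ ∫ t in (0:ℝ)..τ, (1 - u2 t) * β ^ p := by
      apply intervalIntegral.integral_mono_ae_restrict hτ0 hint1 hint2
      filter_upwards [ae_restrict_of_ae hnorm, ae_restrict_mem measurableSet_Icc]
        with t h1' h2'
      have hsq := h1' h2'
      have hu2le : u2 t ≤ 1 := by nlinarith [sq_nonneg (u1 t), sq_nonneg (u2 t - 1)]
      have hb : η1 t ^ p ≤ β ^ p := by
        rw [← hpe.pow_abs]
        exact pow_le_pow_left₀ (abs_nonneg _) (hβub t h2') p
      exact mul_le_mul_of_nonneg_left hb (by linarith)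
    have hconst : (∫ t in (0:ℝ)..τ, (1 - u2 t) * β ^ p)
        = β ^ p * (τ - ∫ t in (0:ℝ)..τ, u2 t) := by
      have hfun : ∀ t, (1 - u2 t) * β ^ p = β ^ p - β ^ p * u2 t := by intro t; ring
      simp_rw [hfun]
      rw [intervalIntegral.integral_sub intervalIntegrable_const (hu2int.const_mul _),
        intervalIntegral.integral_const_mul, intervalIntegral.integral_const]
      simp
      ring
    rw [hsplit]
    rw [hconst] at hupper
    exact hupper
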